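/- Let g ∈ C¹(ℝ) with g(0)=0 and g'(s) ≥ b > 0 for all s, let c > 0, f ∈ L^∞([t₀,∞)), and let u, v be two bounded solutions of u'' + c u' + g(u) = f(t) on J = [t₀, ∞). Set M = max of the limsups at +∞ of |u| and |v|, and A = sup_{|s| ≤ M} (g'(s) − b). If A < c·max{c, 2√b}, then there exist δ > 0 and K > 0 such that |u(t) − v(t)| + |u'(t) − v'(t)| ≤ K exp(−δ t) for all t ∈ J. -/

import Mathlib

open Real Filter Set

lemma lem_lower (g : ℝ → ℝ) (hgd : Differentiable ℝ g) (b : ℝ)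
    (hg' : ∀ s, b ≤ deriv g s) {x y : ℝ} (hxy : y ≤ x) :
    b * (x - y) ≤ g x - g y := by
  have hmono : Monotone (fun x => g x - b * x) := by
    apply monotone_of_deriv_nonneg
    · exact hgd.sub ((differentiable_id.const_mul b))
    · intro x
      have : HasDerivAt (fun x => g x - b * x) (deriv g x - b) x := by
        simpa using ((hgd x).hasDerivAt.fun_sub ((hasDerivAt_id x).const_mul b))
      rw [this.deriv]
      linarith [hg' x]
  have := hmono hxy
  simp only at this
  nlinarith

lemma lem_upper (g : ℝ → ℝ) (hgd : Differentiable ℝ g) (B lo hi : ℝ)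
    (hB : ∀ x ∈ Icc lo hi, deriv g x ≤ B) {x y : ℝ}
    (hx : x ∈ Icc lo hi) (hy : y ∈ Icc lo hi) (hxy : y ≤ x) :
    g x - g y ≤ B * (x - y) := by
  have hmono : MonotoneOn (fun x => B * x - g x) (Icc lo hi) := by
    apply monotoneOn_of_deriv_nonneg (convex_Icc lo hi)
    · exact ((continuous_const.mul continuous_id).sub hgd.continuous).continuousOn
    · exact ((differentiable_id.const_mul B).sub hgd).differentiableOn
    · intro x hxm
      have hd : HasDerivAt (fun x => B * x - g x) (B - deriv g x) x := by
        simpa using (((hasDerivAt_id x).const_mul B).fun_sub (hgd x).hasDerivAt)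
      rw [hd.deriv]
      have : x ∈ Icc lo hi := interior_subset hxm
      linarith [hB x this]
  have := hmono hy hx hxy
  simp only at this
  nlinarith

lemma lem_prod (g : ℝ → ℝ) (hgd : Differentiable ℝ g) (b B lo hi : ℝ)
    (hg' : ∀ s, b ≤ deriv g s) (hB : ∀ x ∈ Icc lo hi, deriv g x ≤ B)
    {x y : ℝ} (hx : x ∈ Icc lo hi) (hy : y ∈ Icc lo hi) :
    b * (x - y) ^ 2 ≤ (g x - g y) * (x - y) ∧ (g x - g y) * (x - y) ≤ B * (x - y) ^ 2 := by
  rcases le_total y x with h | h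
  · have h1 := lem_lower g hgd b hg' h
    have h2 := lem_upper g hgd B lo hi hB hx hy h
    constructor <;> nlinarith
  · have h1 := lem_lower g hgd b hg' h
    have h2 := lem_upper g hgd B lo hi hB hy hx h
    constructor <;> nlinarith

lemma lem_enlarge (h : ℝ → ℝ) (hcont : Continuous h) (M C η : ℝ) (hM : 0 ≤ M) (hη : 0 < η)
    (hbd : ∀ x ∈ Icc (-M) M, h x ≤ C) :
    ∃ ε > 0, ∀ x ∈ Icc (-M - ε) (M + ε), h x ≤ C + η := by
  have hK : IsCompact (Icc (-M - 1) (M + 1)) := isCompact_Icc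
  have huc := hK.uniformContinuousOn_of_continuous hcont.continuousOn
  rw [Metric.uniformContinuousOn_iff] at huc
  obtain ⟨δ, hδ, hd⟩ := huc η hη
  refine ⟨min (δ / 2) 1, by positivity, ?_⟩
  intro x hx
  set ε := min (δ / 2) 1 with hε
  have hε1 : ε ≤ 1 := min_le_right _ _
  have hεδ : ε < δ := lt_of_le_of_lt (min_le_left _ _) (by linarith)
  set y := max (-M) (min M x) with hy
  have hyI : y ∈ Icc (-M) M := by
    constructor
    · exact le_max_left _ _
    · exact max_le (by linarith) (min_le_left _ _)
  have hxy : |x - y| ≤ ε := by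
    rcases hx with ⟨hx1, hx2⟩
    have hε0 : 0 < ε := by positivity
    rw [abs_le]
    rcases le_total x (-M) with hc | hc
    · have : y = -M := by
        rw [hy, max_eq_left (le_trans (min_le_right _ _) hc)]
      rw [this]; constructor <;> linarith
    · rcases le_total M x with hc2 | hc2
      · have : y = M := by
          rw [hy, min_eq_left hc2, max_eq_right (by linarith)]
        rw [this]; constructor <;> linarith
      · have : y = x := by
          rw [hy, min_eq_right hc2, max_eq_right hc]
        rw [this]; constructor <;> linarith
  have hxK : x ∈ Icc (-M - 1) (M + 1) := by
    rcases hx with ⟨hx1, hx2⟩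
    constructor <;> linarith
  have hyK : y ∈ Icc (-M - 1) (M + 1) := by
    rcases hyI with ⟨h1, h2⟩
    constructor <;> linarith
  have := hd x hxK y hyK (by rw [Real.dist_eq]; linarith [abs_nonneg (x - y), lt_of_le_of_lt hxy hεδ])
  rw [Real.dist_eq] at this
  have h2 := hbd y hyI
  have := abs_lt.1 this
  linarith [this.2]

set_option maxHeartbeats 1000000

lemma sq_abs_add_abs (a b : ℝ) : (|a| + |b|) ^ 2 ≤ 2 * a ^ 2 + 2 * b ^ 2 := by
  nlinarith [sq_abs a, sq_abs b, sq_nonneg (|a| - |b|)]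

lemma choose_q (b c B : ℝ) (hb : 0 < b) (hc : 0 < c)
    (hBΘ : B - b < c ^ 2 + 2 * c * Real.sqrt b) :
    ∃ s q r : ℝ, 0 < s ∧ q = s ^ 2 ∧ 0 ≤ r ∧
      c ^ 2 / 4 + q - b ≤ r ∧ B - c ^ 2 / 4 - q ≤ r ∧ r < c * s := by
  have hsb : 0 < Real.sqrt b := Real.sqrt_pos.2 hb
  have hsb2 : Real.sqrt b ^ 2 = b := Real.sq_sqrt hb.le
  obtain ⟨A', hA'⟩ : ∃ A', A' = max (B - b) 0 := ⟨_, rfl⟩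
  have hA'0 : 0 ≤ A' := hA' ▸ le_max_right _ _
  have hA'B : B - b ≤ A' := hA' ▸ le_max_left _ _
  have hA'Θ : A' < c ^ 2 + 2 * c * Real.sqrt b := by
    rw [hA']; exact max_lt hBΘ (by positivity)
  have hsA : Real.sqrt (b + A') < c + Real.sqrt b := by
    rw [Real.sqrt_lt' (by positivity)]
    nlinarith
  obtain ⟨L, hL⟩ : ∃ L, L = max (c / 2 - Real.sqrt b) (Real.sqrt (b + A') - c / 2) := ⟨_, rfl⟩
  obtain ⟨Uu, hU⟩ : ∃ Uu, Uu = c / 2 + Real.sqrt b := ⟨_, rfl⟩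
  have hLU : L < Uu := by
    rw [hL, hU]; exact max_lt (by linarith) (by linarith)
  have hLlb : c / 2 - Real.sqrt b ≤ L := hL ▸ le_max_left _ _
  have hLlb2 : Real.sqrt (b + A') - c / 2 ≤ L := hL ▸ le_max_right _ _
  obtain ⟨s, hs⟩ : ∃ s, s = (L + Uu) / 2 := ⟨_, rfl⟩
  have hUpos : 0 < Uu := by rw [hU]; positivity
  have hs_pos : 0 < s := by rw [hs, hU] at *; nlinarith
  have hsU : s < Uu := by rw [hs]; linarith
  have hsL : L < s := by rw [hs]; linarith
  have hs1 : (s - c / 2) ^ 2 < b := by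
    have h1 : s - c / 2 < Real.sqrt b := by rw [hU] at hsU; linarith
    have h2 : c / 2 - s < Real.sqrt b := by linarith [lt_of_le_of_lt hLlb hsL]
    nlinarith
  have hs2 : b + A' < (s + c / 2) ^ 2 := by
    have h1 : Real.sqrt (b + A') < s + c / 2 := by linarith [lt_of_le_of_lt hLlb2 hsL]
    exact (Real.sqrt_lt' (by linarith [Real.sqrt_nonneg (b + A')])).1 h1
  refine ⟨s, s ^ 2, max (c ^ 2 / 4 + s ^ 2 - b) (b + A' - c ^ 2 / 4 - s ^ 2),
    hs_pos, rfl, ?_, le_max_left _ _, ?_, ?_⟩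
  · have h1 := le_max_left (c ^ 2 / 4 + s ^ 2 - b) (b + A' - c ^ 2 / 4 - s ^ 2)
    have h2 := le_max_right (c ^ 2 / 4 + s ^ 2 - b) (b + A' - c ^ 2 / 4 - s ^ 2)
    nlinarith
  · have h2 := le_max_right (c ^ 2 / 4 + s ^ 2 - b) (b + A' - c ^ 2 / 4 - s ^ 2)
    linarith
  · exact max_lt (by nlinarith) (by nlinarith)

lemma engine (b c B T : ℝ) (hb : 0 < b) (hc : 0 < c)
    (hBΘ : B - b < c ^ 2 + 2 * c * Real.sqrt b)
    (w w' G : ℝ → ℝ)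
    (hw : ∀ t, T ≤ t → HasDerivAt w (w' t) t)
    (hw' : ∀ t, T ≤ t → HasDerivAt w' (-(c * w' t) - G t) t)
    (hG1 : ∀ t, T ≤ t → b * (w t) ^ 2 ≤ G t * w t)
    (hG2 : ∀ t, T ≤ t → G t * w t ≤ B * (w t) ^ 2)
    (hG0 : ∀ t, T ≤ t → w t = 0 → G t = 0) :
    ∃ δ > 0, ∃ K > 0, ∀ t, T ≤ t → |w t| + |w' t| ≤ K * Real.exp (-δ * t) := by
  obtain ⟨s, q, r, hs_pos, hqdef, hr0, hr1, hr2, hrc⟩ := choose_q b c B hb hc hBΘ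
  have hq_pos : 0 < q := by rw [hqdef]; positivity
  obtain ⟨lam, hlamdef⟩ : ∃ lam : ℝ, lam = c - r / s := ⟨_, rfl⟩
  have hlam : 0 < lam := by
    have : r / s < c := (div_lt_iff₀ hs_pos).2 (by linarith)
    rw [hlamdef]; linarith
  obtain ⟨z, hz⟩ : ∃ z : ℝ → ℝ, ∀ t, z t = w' t + (c / 2) * w t := ⟨_, fun _ => rfl⟩
  obtain ⟨V, hV⟩ : ∃ V : ℝ → ℝ, ∀ t, V t = (z t) ^ 2 + q * (w t) ^ 2 := by
    exact ⟨fun t => (z t) ^ 2 + q * (w t) ^ 2, fun _ => rfl⟩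
  obtain ⟨Vd, hVd⟩ : ∃ Vd : ℝ → ℝ,
      ∀ t, Vd t = -c * V t + 2 * z t * ((c ^ 2 / 4 + q) * w t - G t) := by
    exact ⟨fun t => -c * V t + 2 * z t * ((c ^ 2 / 4 + q) * w t - G t), fun _ => rfl⟩
  have hV0 : ∀ t, 0 ≤ V t := fun t => by
    rw [hV t]
    exact add_nonneg (sq_nonneg _) (mul_nonneg hq_pos.le (sq_nonneg _))
  have hVderiv : ∀ t, T ≤ t → HasDerivAt V (Vd t) t := by
    intro t ht
    have hwd := hw t ht
    have hw'd := hw' t ht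
    have hzd : HasDerivAt (fun τ => w' τ + (c / 2) * w τ)
        (-(c * w' t) - G t + (c / 2) * w' t) t := hw'd.add (hwd.const_mul (c / 2))
    have h2 : HasDerivAt (fun τ => (w' τ + (c / 2) * w τ) ^ 2 + q * (w τ) ^ 2)
        (2 * (w' t + (c / 2) * w t) ^ 1 * (-(c * w' t) - G t + (c / 2) * w' t)
          + q * (2 * (w t) ^ 1 * w' t)) t := (hzd.pow 2).add ((hwd.pow 2).const_mul q)
    have hVfun : V = fun τ => (w' τ + (c / 2) * w τ) ^ 2 + q * (w τ) ^ 2 := by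
      funext τ; rw [hV τ, hz τ]
    rw [hVfun, hVd t, hV t, hz t]
    convert h2 using 1
    ring
  have hdecay : ∀ t, T ≤ t → Vd t ≤ -lam * V t := by
    intro t ht
    have hp1 := hG1 t ht
    have hp2 := hG2 t ht
    have hβw : |((c ^ 2 / 4 + q) * w t - G t) * w t| ≤ r * (w t) ^ 2 := by
      rw [abs_le]
      constructor
      · nlinarith [sq_nonneg (w t)]
      · nlinarith [sq_nonneg (w t)]
    have hβ : |(c ^ 2 / 4 + q) * w t - G t| ≤ r * |w t| := by
      rcases eq_or_ne (w t) 0 with h0 | h0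
      · rw [h0, hG0 t ht h0]; simp
      · have hw0 : 0 < |w t| := abs_pos.2 h0
        rw [abs_mul] at hβw
        refine le_of_mul_le_mul_right ?_ hw0
        calc |(c ^ 2 / 4 + q) * w t - G t| * |w t| ≤ r * (w t) ^ 2 := hβw
          _ = r * |w t| * |w t| := by rw [← sq_abs]; ring
    have hzβ : 2 * z t * ((c ^ 2 / 4 + q) * w t - G t) ≤ (r / s) * V t := by
      have h1 : 2 * z t * ((c ^ 2 / 4 + q) * w t - G t)
          ≤ 2 * |z t| * |(c ^ 2 / 4 + q) * w t - G t| := by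
        calc 2 * z t * ((c ^ 2 / 4 + q) * w t - G t)
            ≤ |2 * z t * ((c ^ 2 / 4 + q) * w t - G t)| := le_abs_self _
          _ = 2 * |z t| * |(c ^ 2 / 4 + q) * w t - G t| := by
              rw [abs_mul, abs_mul]
              simp [abs_of_nonneg]
      have h2 : 2 * |z t| * |(c ^ 2 / 4 + q) * w t - G t| ≤ 2 * |z t| * (r * |w t|) :=
        mul_le_mul_of_nonneg_left hβ (by positivity)
      have hkey : 2 * |z t| * |w t| * s ≤ (z t) ^ 2 + s ^ 2 * (w t) ^ 2 := by
        nlinarith [sq_nonneg (|z t| - s * |w t|), sq_abs (z t), sq_abs (w t)]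
      have h3 : 2 * |z t| * (r * |w t|) ≤ (r / s) * (z t) ^ 2 + r * s * (w t) ^ 2 := by
        have h5 := mul_le_mul_of_nonneg_left hkey (div_nonneg hr0 hs_pos.le)
        calc 2 * |z t| * (r * |w t|) = (r / s) * (2 * |z t| * |w t| * s) := by
              field_simp
          _ ≤ (r / s) * ((z t) ^ 2 + s ^ 2 * (w t) ^ 2) := h5
          _ = (r / s) * (z t) ^ 2 + r * s * (w t) ^ 2 := by field_simp
      have h4 : (r / s) * (z t) ^ 2 + r * s * (w t) ^ 2 = (r / s) * V t := by
        rw [hV t, hqdef]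
        field_simp
      linarith
    have hVdeq := hVd t
    have hlameq : -lam * V t = -c * V t + (r / s) * V t := by rw [hlamdef]; ring
    linarith
  -- Gronwall
  obtain ⟨W, hW⟩ : ∃ W : ℝ → ℝ, ∀ t, W t = V t * Real.exp (lam * t) := by
    exact ⟨fun t => V t * Real.exp (lam * t), fun _ => rfl⟩
  have hWderiv : ∀ t, T ≤ t →
      HasDerivAt W (Vd t * Real.exp (lam * t) + V t * (Real.exp (lam * t) * lam)) t := by
    intro t ht
    have hE : HasDerivAt (fun x => Real.exp (lam * x)) (Real.exp (lam * t) * lam) t := by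
      simpa using (((hasDerivAt_id t).const_mul lam).exp)
    have hWfun : W = fun t => V t * Real.exp (lam * t) := funext hW
    rw [hWfun]
    exact (hVderiv t ht).mul hE
  have hWanti : AntitoneOn W (Ici T) := by
    apply antitoneOn_of_deriv_nonpos (convex_Ici T)
    · intro t ht
      exact (hWderiv t ht).continuousAt.continuousWithinAt
    · intro t ht
      rw [interior_Ici] at ht
      exact (hWderiv t ht.le).differentiableAt.differentiableWithinAt
    · intro t ht
      rw [interior_Ici] at ht
      rw [(hWderiv t ht.le).deriv]
      have hd := hdecay t ht.le
      nlinarith [Real.exp_pos (lam * t), hV0 t]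
  have hVbound : ∀ t, T ≤ t → V t ≤ V T * Real.exp (lam * T) * Real.exp (-lam * t) := by
    intro t ht
    have hWle : W t ≤ W T := hWanti (self_mem_Ici) ht ht
    rw [hW t, hW T] at hWle
    have he1 : Real.exp (lam * t) * Real.exp (-lam * t) = 1 := by
      rw [← Real.exp_add]
      norm_num
    have he2 : 0 < Real.exp (-lam * t) := Real.exp_pos _
    calc V t = V t * Real.exp (lam * t) * Real.exp (-lam * t) := by
          rw [mul_assoc, he1, mul_one]
      _ ≤ V T * Real.exp (lam * T) * Real.exp (-lam * t) :=
          mul_le_mul_of_nonneg_right hWle he2.le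
  -- from V to |w| + |w'|
  obtain ⟨C₀, hC₀pos, hC₀4, hC₀q⟩ : ∃ C₀ : ℝ, 0 < C₀ ∧ 4 ≤ C₀ ∧ (2 + c ^ 2) / q ≤ C₀ := by
    refine ⟨4 + (2 + c ^ 2) / q, by positivity, ?_, ?_⟩
    · have : 0 ≤ (2 + c ^ 2) / q := by positivity
      linarith
    · nlinarith
  have hsum : ∀ t, (|w t| + |w' t|) ^ 2 ≤ C₀ * V t := by
    intro t
    have h1 : w' t = z t - (c / 2) * w t := by rw [hz t]; ring
    have h2 : (|w t| + |w' t|) ^ 2 ≤ 2 * (w t) ^ 2 + 2 * (w' t) ^ 2 :=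
      sq_abs_add_abs (w t) (w' t)
    have h3 : 2 * (w' t) ^ 2 ≤ 4 * (z t) ^ 2 + c ^ 2 * (w t) ^ 2 := by
      rw [h1]; nlinarith [sq_nonneg (z t + (c / 2) * w t)]
    have h4 : 2 * (w t) ^ 2 + c ^ 2 * (w t) ^ 2 ≤ C₀ * (q * (w t) ^ 2) := by
      have h6 := mul_le_mul_of_nonneg_right hC₀q (mul_nonneg hq_pos.le (sq_nonneg (w t)))
      calc 2 * (w t) ^ 2 + c ^ 2 * (w t) ^ 2 = (2 + c ^ 2) / q * (q * (w t) ^ 2) := by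
            field_simp
        _ ≤ C₀ * (q * (w t) ^ 2) := h6
    have h5 : 4 * (z t) ^ 2 ≤ C₀ * (z t) ^ 2 :=
      mul_le_mul_of_nonneg_right hC₀4 (sq_nonneg _)
    have hVexp : C₀ * V t = C₀ * (z t) ^ 2 + C₀ * (q * (w t) ^ 2) := by
      rw [hV t]; ring
    linarith
  obtain ⟨D, hD, hDe⟩ : ∃ D : ℝ, 0 < D ∧ C₀ * (V T * Real.exp (lam * T)) ≤ D :=
    ⟨C₀ * ((V T + 1) * Real.exp (lam * T)),
      mul_pos hC₀pos (mul_pos (by linarith [hV0 T]) (Real.exp_pos _)),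
      by nlinarith [Real.exp_pos (lam * T), hV0 T]⟩
  refine ⟨lam / 2, by positivity, Real.sqrt D, Real.sqrt_pos.2 hD, ?_⟩
  intro t ht
  have h1 : (|w t| + |w' t|) ^ 2 ≤ D * Real.exp (-lam * t) := by
    have h2 := hVbound t ht
    have h3 := hsum t
    have h4 : C₀ * V t ≤ C₀ * (V T * Real.exp (lam * T) * Real.exp (-lam * t)) :=
      mul_le_mul_of_nonneg_left h2 hC₀pos.le
    have h5 : C₀ * (V T * Real.exp (lam * T) * Real.exp (-lam * t))
        ≤ D * Real.exp (-lam * t) := by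
      have h6 := mul_le_mul_of_nonneg_right hDe (Real.exp_pos (-lam * t)).le
      calc C₀ * (V T * Real.exp (lam * T) * Real.exp (-lam * t))
          = C₀ * (V T * Real.exp (lam * T)) * Real.exp (-lam * t) := by ring
        _ ≤ D * Real.exp (-lam * t) := h6
    linarith
  have hrhs : Real.sqrt D * Real.exp (-(lam / 2) * t)
      = Real.sqrt (D * Real.exp (-lam * t)) := by
    rw [Real.sqrt_mul hD.le]
    congr 1
    rw [show Real.exp (-lam * t) = Real.exp (-(lam / 2) * t) ^ 2 by
      rw [sq, ← Real.exp_add]; ring_nf]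
    exact (Real.sqrt_sq (Real.exp_nonneg _)).symm
  rw [hrhs]
  calc |w t| + |w' t| = Real.sqrt ((|w t| + |w' t|) ^ 2) :=
        (Real.sqrt_sq (by positivity)).symm
    _ ≤ Real.sqrt (D * Real.exp (-lam * t)) := Real.sqrt_le_sqrt h1

theorem stmt_15 (b c t₀ : ℝ) (hb : 0 < b) (hc : 0 < c)
    (g : ℝ → ℝ) (hg : ContDiff ℝ 1 g) (hg0 : g 0 = 0)
    (hg' : ∀ s : ℝ, b ≤ deriv g s)
    (f : ℝ → ℝ) (hf : ∃ Cf : ℝ, ∀ t, t₀ ≤ t → |f t| ≤ Cf)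
    (u u' v v' : ℝ → ℝ)
    (hu1 : ∀ t, t₀ ≤ t → HasDerivAt u (u' t) t)
    (hu2 : ∀ t, t₀ ≤ t →
      HasDerivAt u' (f t - c * u' t - g (u t)) t)
    (hv1 : ∀ t, t₀ ≤ t → HasDerivAt v (v' t) t)
    (hv2 : ∀ t, t₀ ≤ t →
      HasDerivAt v' (f t - c * v' t - g (v t)) t)
    (hubd : ∃ Ku : ℝ, ∀ t, t₀ ≤ t → |u t| ≤ Ku)
    (hvbd : ∃ Kv : ℝ, ∀ t, t₀ ≤ t → |v t| ≤ Kv)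
    (M A : ℝ)
    (hM : M = max (limsup (fun t => |u t|) atTop) (limsup (fun t => |v t|) atTop))
    (hA : A = sSup ((fun s => deriv g s - b) '' Icc (-M) M))
    (hAcond : A < c * max c (2 * Real.sqrt b)) :
    ∃ δ > 0, ∃ K > 0, ∀ t, t₀ ≤ t →
      |u t - v t| + |u' t - v' t| ≤ K * Real.exp (-δ * t) := by
  obtain ⟨Ku, hKu⟩ := hubd
  obtain ⟨Kv, hKv⟩ := hvbd
  have hgd : Differentiable ℝ g := hg.differentiable one_ne_zero
  have hgc : Continuous (deriv g) := hg.continuous_deriv le_rfl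
  have hbu : IsBoundedUnder (· ≤ ·) atTop (fun t => |u t|) :=
    ⟨Ku, eventually_map.2 (eventually_atTop.2 ⟨t₀, hKu⟩)⟩
  have hbv : IsBoundedUnder (· ≤ ·) atTop (fun t => |v t|) :=
    ⟨Kv, eventually_map.2 (eventually_atTop.2 ⟨t₀, hKv⟩)⟩
  have hM0 : 0 ≤ M := by
    rw [hM]
    exact le_trans (le_limsup_of_frequently_le
      (Frequently.of_forall fun t => abs_nonneg _) hbu) (le_max_left _ _)
  have hbA : ∀ x ∈ Icc (-M) M, deriv g x - b ≤ A := by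
    intro x hx
    rw [hA]
    refine le_csSup ?_ (mem_image_of_mem _ hx)
    exact (isCompact_Icc.image_of_continuousOn
      ((hgc.sub continuous_const).continuousOn)).bddAbove
  have hA0 : 0 ≤ A := le_trans (by linarith [hg' 0]) (hbA 0 ⟨by linarith, hM0⟩)
  have hsb : 0 < Real.sqrt b := Real.sqrt_pos.2 hb
  have hΘ : A < c ^ 2 + 2 * c * Real.sqrt b := by
    have h1 : c * max c (2 * Real.sqrt b) ≤ c * (c + 2 * Real.sqrt b) :=
      mul_le_mul_of_nonneg_left (max_le (by linarith) (by linarith)) hc.le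
    nlinarith
  obtain ⟨η, hηdef⟩ : ∃ η : ℝ, η = (c ^ 2 + 2 * c * Real.sqrt b - A) / 2 := ⟨_, rfl⟩
  have hη : 0 < η := by rw [hηdef]; linarith
  have hA'Θ : A + η < c ^ 2 + 2 * c * Real.sqrt b := by rw [hηdef]; linarith
  obtain ⟨ε, hε, hBd⟩ := lem_enlarge (deriv g) hgc M (b + A) η hM0 hη
    (fun x hx => by linarith [hbA x hx])
  have hevu : ∀ᶠ t in atTop, |u t| < M + ε := by
    refine eventually_lt_of_limsup_lt ?_ hbu
    have : limsup (fun t => |u t|) atTop ≤ M := hM ▸ le_max_left _ _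
    linarith
  have hevv : ∀ᶠ t in atTop, |v t| < M + ε := by
    refine eventually_lt_of_limsup_lt ?_ hbv
    have : limsup (fun t => |v t|) atTop ≤ M := hM ▸ le_max_right _ _
    linarith
  obtain ⟨T₀, hT₀⟩ := eventually_atTop.1 (hevu.and hevv)
  obtain ⟨T, hTdef⟩ : ∃ T : ℝ, T = max T₀ t₀ := ⟨_, rfl⟩
  have hTt₀ : t₀ ≤ T := hTdef ▸ le_max_right _ _
  have hmem : ∀ t, T ≤ t → u t ∈ Icc (-M - ε) (M + ε) ∧ v t ∈ Icc (-M - ε) (M + ε) := by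
    intro t ht
    obtain ⟨h1, h2⟩ := hT₀ t (le_trans (hTdef ▸ le_max_left _ _) ht)
    obtain ⟨h1a, h1b⟩ := abs_lt.1 h1
    obtain ⟨h2a, h2b⟩ := abs_lt.1 h2
    exact ⟨⟨by linarith, by linarith⟩, ⟨by linarith, by linarith⟩⟩
  -- apply the engine
  have hBd' : ∀ x ∈ Icc (-M - ε) (M + ε), deriv g x ≤ b + (A + η) := by
    intro x hx
    have := hBd x hx
    linarith
  obtain ⟨δ, hδ, K, hK, hbound⟩ :=
    engine b c (b + (A + η)) T hb hc (by linarith)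
      (fun t => u t - v t) (fun t => u' t - v' t) (fun t => g (u t) - g (v t))
      (fun t ht => (hu1 t (hTt₀.trans ht)).sub (hv1 t (hTt₀.trans ht)))
      (fun t ht => by
        have h := (hu2 t (hTt₀.trans ht)).fun_sub (hv2 t (hTt₀.trans ht))
        exact h.congr_deriv (by ring))
      (fun t ht => (lem_prod g hgd b (b + (A + η)) (-M - ε) (M + ε) hg' hBd'
        (hmem t ht).1 (hmem t ht).2).1)
      (fun t ht => (lem_prod g hgd b (b + (A + η)) (-M - ε) (M + ε) hg' hBd'
        (hmem t ht).1 (hmem t ht).2).2)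
      (fun t ht h0 => by
        have huv : u t = v t := sub_eq_zero.mp h0
        rw [sub_eq_zero]
        exact congrArg g huv)
  -- compact interval [t₀, T]
  have hcont : ContinuousOn (fun t => |u t - v t| + |u' t - v' t|) (Icc t₀ T) := by
    intro x hx
    exact ((((hu1 x hx.1).sub (hv1 x hx.1)).continuousAt.abs).add
      (((hu2 x hx.1).sub (hv2 x hx.1)).continuousAt.abs)).continuousWithinAt
  obtain ⟨C₂, hC₂⟩ := (isCompact_Icc (a := t₀) (b := T)).exists_bound_of_continuousOn hcont
  obtain ⟨K', hK'def⟩ : ∃ K' : ℝ, K' = K + (max C₂ 0 + 1) * Real.exp (δ * T) := ⟨_, rfl⟩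
  have hmax0 : 0 ≤ max C₂ 0 := le_max_right _ _
  have hK' : 0 < K' := by
    rw [hK'def]
    have h1 : 0 < (max C₂ 0 + 1) * Real.exp (δ * T) :=
      mul_pos (by linarith) (Real.exp_pos _)
    linarith
  refine ⟨δ, hδ, K', hK', ?_⟩
  intro t ht
  have hexp : 0 < Real.exp (-δ * t) := Real.exp_pos _
  rcases le_total T t with hc1 | hc1
  · have h1 := hbound t hc1
    have h2 : K * Real.exp (-δ * t) ≤ K' * Real.exp (-δ * t) := by
      apply mul_le_mul_of_nonneg_right _ hexp.le
      rw [hK'def]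
      nlinarith [Real.exp_pos (δ * T)]
    linarith
  · have hft : |u t - v t| + |u' t - v' t| ≤ max C₂ 0 := by
      have h1 := hC₂ t ⟨ht, hc1⟩
      rw [Real.norm_eq_abs] at h1
      exact le_trans (le_abs_self _) (le_trans h1 (le_max_left _ _))
    have he : 1 ≤ Real.exp (δ * T) * Real.exp (-δ * t) := by
      rw [← Real.exp_add]
      apply Real.one_le_exp
      nlinarith
    have h3 : max C₂ 0 + 1 ≤ (max C₂ 0 + 1) * (Real.exp (δ * T) * Real.exp (-δ * t)) := by
      nlinarith
    have h4 : K' * Real.exp (-δ * t)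
        = K * Real.exp (-δ * t) + (max C₂ 0 + 1) * (Real.exp (δ * T) * Real.exp (-δ * t)) := by
      rw [hK'def]; ring
    nlinarith [mul_nonneg hK.le hexp.le]
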